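/- arXiv:2506.00889 — 2 statements merged into one kernel-verified Lean document; each statement's English description precedes it below -/
import Mathlib

section
/- (Lemma 1, case RR < 1.) Let 0 < p_1 < p_0 < 1. Then for every λ with 0 ≤ λ ≤ 1, the transformation-based ratio WR(λ) := W_λ(p_1)/W_λ(p_0) satisfies WR(λ) < RR, where RR = p_1/p_0. Consequently B(λ) := max{RR/WR(λ), WR(λ)/RR} equals RR/WR(λ). -/
/-- The Aranda-Ordaz transformation `W_λ(θ)`: equals `((1-θ)^(-λ) - 1)/λ` for `λ ≠ 0`
and `-log(1-θ)` for `λ = 0`. -/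
noncomputable def arandaOrdaz (l θ : ℝ) : ℝ :=
  if l = 0 then -Real.log (1 - θ) else ((1 - θ) ^ (-l) - 1) / l

/-- The transformation-based ratio `WR(λ) = W_λ(p₁)/W_λ(p₀)`. -/
noncomputable def WR (p₀ p₁ l : ℝ) : ℝ := arandaOrdaz l p₁ / arandaOrdaz l p₀

/-- The relative discrepancy `B(λ) = max{RR/WR(λ), WR(λ)/RR}` with `RR = p₁/p₀`. -/
noncomputable def B (p₀ p₁ l : ℝ) : ℝ :=
  max ((p₁ / p₀) / WR p₀ p₁ l) (WR p₀ p₁ l / (p₁ / p₀))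

lemma arandaOrdaz_zero (l : ℝ) : arandaOrdaz l 0 = 0 := by
  unfold arandaOrdaz
  split <;> simp [Real.one_rpow]

lemma arandaOrdaz_hasDerivAt (l : ℝ) {x : ℝ} (hx : x ∈ Set.Ioo (0:ℝ) 1) :
    HasDerivAt (arandaOrdaz l) ((1 - x) ^ (-(l + 1))) x := by
  obtain ⟨hx0, hx1⟩ := hx
  have h1x : (0:ℝ) < 1 - x := by linarith
  have hbase : HasDerivAt (fun y : ℝ => 1 - y) (-1) x := by
    simpa using (hasDerivAt_id x).const_sub 1
  by_cases hl : l = 0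
  · have h : HasDerivAt (fun y : ℝ => -Real.log (1 - y)) ((1 - x)⁻¹) x := by
      have := ((Real.hasDerivAt_log h1x.ne').comp x hbase).neg
      refine this.congr_deriv ?_
      ring
    have heq : arandaOrdaz l = fun y : ℝ => -Real.log (1 - y) := by
      funext y; simp [arandaOrdaz, hl]
    rw [heq, hl]
    have : (1 - x) ^ (-((0:ℝ) + 1)) = (1 - x)⁻¹ := by
      rw [zero_add, Real.rpow_neg_one]
    rw [this]; exact h
  · have hpow : HasDerivAt (fun y : ℝ => (1 - y) ^ (-l))
        (-l * (1 - x) ^ (-l - 1) * (-1)) x :=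
      (Real.hasDerivAt_rpow_const (p := -l) (Or.inl h1x.ne')).comp x hbase
    have h : HasDerivAt (fun y : ℝ => ((1 - y) ^ (-l) - 1) / l)
        ((1 - x) ^ (-(l + 1))) x := by
      have := (hpow.sub_const 1).div_const l
      refine this.congr_deriv ?_
      have : -(l + 1) = -l - 1 := by ring
      rw [this]
      field_simp
    have heq : arandaOrdaz l = fun y : ℝ => ((1 - y) ^ (-l) - 1) / l := by
      funext y; simp [arandaOrdaz, hl]
    rw [heq]; exact h

lemma arandaOrdaz_strictConvexOn {l : ℝ} (hl : 0 ≤ l) :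
    StrictConvexOn ℝ (Set.Ico 0 1) (arandaOrdaz l) := by
  apply StrictMonoOn.strictConvexOn_of_deriv (convex_Ico 0 1)
  · -- continuity
    have : ∀ x ∈ Set.Ico (0:ℝ) 1, (1:ℝ) - x ≠ 0 := fun x hx => by
      have := hx.2; intro h; linarith [sub_eq_zero.mp h]
    unfold arandaOrdaz
    split
    · exact ((continuousOn_const.sub continuousOn_id).log this).neg
    · apply ContinuousOn.div_const
      apply ContinuousOn.sub _ continuousOn_const
      exact (continuousOn_const.sub continuousOn_id).rpow_const
        (fun x hx => Or.inl (this x hx))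
  · rw [interior_Ico]
    intro x hx y hy hxy
    rw [(arandaOrdaz_hasDerivAt l hx).deriv, (arandaOrdaz_hasDerivAt l hy).deriv]
    exact Real.rpow_lt_rpow_of_neg (by linarith [hy.2]) (by linarith) (by linarith)

lemma arandaOrdaz_pos {l x : ℝ} (hl : 0 ≤ l) (hx0 : 0 < x) (hx1 : x < 1) :
    0 < arandaOrdaz l x := by
  have h1x0 : (0:ℝ) < 1 - x := by linarith
  have h1x1 : (1:ℝ) - x < 1 := by linarith
  unfold arandaOrdaz
  split
  case isTrue h => simpa using Real.log_neg h1x0 h1x1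
  case isFalse h =>
    have hl' : 0 < l := lt_of_le_of_ne hl (Ne.symm h)
    apply div_pos _ hl'
    have h2 : 1 < (1 - x) ^ (-l) :=
      Real.one_lt_rpow_of_pos_of_lt_one_of_neg h1x0 h1x1 (by linarith)
    linarith

/-- Lemma 1, case RR < 1: if `0 < p₁ < p₀ < 1`, then for all `λ ∈ [0,1]`,
`WR(λ) < RR`, and consequently `B(λ) = RR/WR(λ)`. -/
theorem lemma1_RR_lt_one (p₀ p₁ : ℝ) (h0 : 0 < p₁) (h10 : p₁ < p₀) (h1 : p₀ < 1) :
    ∀ l : ℝ, 0 ≤ l → l ≤ 1 →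
      WR p₀ p₁ l < p₁ / p₀ ∧ B p₀ p₁ l = (p₁ / p₀) / WR p₀ p₁ l := by
  intro l hl _
  have hp₀0 : 0 < p₀ := h0.trans h10
  have hp₁1 : p₁ < 1 := h10.trans h1
  have hW₁ : 0 < arandaOrdaz l p₁ := arandaOrdaz_pos hl h0 hp₁1
  have hW₀ : 0 < arandaOrdaz l p₀ := arandaOrdaz_pos hl hp₀0 h1
  have hslope := (arandaOrdaz_strictConvexOn hl).secant_strict_mono
    (a := 0) (x := p₁) (y := p₀)
    ⟨le_refl 0, one_pos⟩ ⟨h0.le, hp₁1⟩ ⟨hp₀0.le, h1⟩ h0.ne' hp₀0.ne' h10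
  rw [arandaOrdaz_zero, sub_zero, sub_zero, sub_zero, sub_zero] at hslope
  have hWR : WR p₀ p₁ l < p₁ / p₀ := by
    unfold WR
    rw [div_lt_div_iff₀ hW₀ hp₀0]
    rw [div_lt_div_iff₀ h0 hp₀0] at hslope
    linarith
  refine ⟨hWR, ?_⟩
  have hWRpos : 0 < WR p₀ p₁ l := div_pos hW₁ hW₀
  have hRRpos : 0 < p₁ / p₀ := div_pos h0 hp₀0
  unfold B
  apply max_eq_left
  have := (div_lt_one hRRpos).mpr hWR
  have := (one_le_div hWRpos).mpr hWR.le
  linarith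
end

section
/- (Minimality of the complementary log-log model within the Aranda-Ordaz family.) Fix any p_0, p_1 with 0 < p_0 < 1, 0 < p_1 < 1 and p_0 ≠ p_1. Then for every λ with 0 < λ ≤ 1, B(0) < B(λ); that is, λ = 0 (the complementary log-log transformation) uniquely minimizes the relative discrepancy B over [0, 1]. -/
/-- The slope of `exp` from `0` to `t`. -/
noncomputable def gsl (t : ℝ) : ℝ := (Real.exp t - 1) / t

lemma gsl_lt {s t : ℝ} (hst : s < t) (hs : s ≠ 0) (ht : t ≠ 0) : gsl s < gsl t := by
  have := strictConvexOn_exp.secant_strict_mono (a := 0) (Set.mem_univ 0)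
    (Set.mem_univ s) (Set.mem_univ t) hs ht hst
  simpa [gsl, Real.exp_zero] using this

lemma gsl_pos {t : ℝ} (ht : t ≠ 0) : 0 < gsl t := by
  rcases ht.lt_or_gt with h | h
  · have : Real.exp t < 1 := by simpa using Real.exp_lt_exp.mpr (show t < 0 from h)
    exact div_pos_of_neg_of_neg (by linarith) h
  · have : 1 < Real.exp t := by simpa using Real.exp_lt_exp.mpr (show (0:ℝ) < t from h)
    exact div_pos (by linarith) h

lemma xlog_pos {p : ℝ} (h0 : 0 < p) (h1 : p < 1) : 0 < -Real.log (1 - p) := by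
  have : Real.log (1 - p) < 0 := Real.log_neg (by linarith) (by linarith)
  linarith

lemma p_eq {p : ℝ} (h0 : 0 < p) (h1 : p < 1) :
    p = (-Real.log (1 - p)) * gsl (-(-Real.log (1 - p))) := by
  have h1p : (0:ℝ) < 1 - p := by linarith
  have hlx : Real.log (1 - p) ≠ 0 := by
    have := xlog_pos h0 h1; intro h; rw [h] at this; simp at this
  have he : Real.exp (-(-Real.log (1 - p))) = 1 - p := by
    simpa using Real.exp_log h1p
  rw [gsl, he]
  field_simp
  ring

lemma ao_zero {p : ℝ} : arandaOrdaz 0 p = -Real.log (1 - p) := if_pos rfl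

lemma ao_eq {p l : ℝ} (h0 : 0 < p) (h1 : p < 1) (hl : l ≠ 0) :
    arandaOrdaz l p = (-Real.log (1 - p)) * gsl (l * (-Real.log (1 - p))) := by
  have h1p : (0:ℝ) < 1 - p := by linarith
  have hlx : Real.log (1 - p) ≠ 0 := by
    have := xlog_pos h0 h1; intro h; rw [h] at this; simp at this
  have hr : (1 - p) ^ (-l) = Real.exp (l * (-Real.log (1 - p))) := by
    rw [Real.rpow_def_of_pos h1p]; ring_nf
  rw [arandaOrdaz, if_neg hl, hr, gsl]
  field_simp

lemma ao_pos {p l : ℝ} (h0 : 0 < p) (h1 : p < 1) (hl : 0 ≤ l) :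
    0 < arandaOrdaz l p := by
  rcases eq_or_lt_of_le hl with rfl | hl'
  · simpa [arandaOrdaz] using xlog_pos h0 h1
  · rw [ao_eq h0 h1 hl'.ne']
    exact mul_pos (xlog_pos h0 h1) (gsl_pos (mul_pos hl' (xlog_pos h0 h1)).ne')

lemma B_symm {p₀ p₁ l : ℝ} (h00 : 0 < p₀) (h01 : p₀ < 1) (h10 : 0 < p₁) (h11 : p₁ < 1)
    (hl : 0 ≤ l) : B p₀ p₁ l = B p₁ p₀ l := by
  have w0 := (ao_pos h00 h01 hl).ne'
  have w1 := (ao_pos h10 h11 hl).ne'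
  rw [B, B, WR, WR, max_comm]
  congr 1
  · field_simp
  · field_simp

/-- the ordered case -/
lemma B_zero_min_lt (p₀ p₁ : ℝ) (h00 : 0 < p₀) (h01 : p₀ < 1)
    (h10 : 0 < p₁) (h11 : p₁ < 1) (hlt : p₀ < p₁) {l : ℝ} (hl : 0 < l) :
    B p₀ p₁ 0 < B p₀ p₁ l := by
  set x₀ := -Real.log (1 - p₀) with hx₀def
  set x₁ := -Real.log (1 - p₁) with hx₁def
  have hx₀ : 0 < x₀ := xlog_pos h00 h01
  have hx₁ : 0 < x₁ := xlog_pos h10 h11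
  have hxlt : x₀ < x₁ := by
    have : Real.log (1 - p₁) < Real.log (1 - p₀) :=
      Real.log_lt_log (by linarith) (by linarith)
    simp only [hx₀def, hx₁def]; linarith
  have hg0 : 0 < gsl (-x₀) := gsl_pos (neg_ne_zero.mpr hx₀.ne')
  have hg1 : 0 < gsl (-x₁) := gsl_pos (neg_ne_zero.mpr hx₁.ne')
  have hgl0 : 0 < gsl (l * x₀) := gsl_pos (mul_pos hl hx₀).ne'
  have hgl1 : 0 < gsl (l * x₁) := gsl_pos (mul_pos hl hx₁).ne'
  have hglt : gsl (l * x₀) < gsl (l * x₁) :=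
    gsl_lt (by nlinarith) (mul_pos hl hx₀).ne' (mul_pos hl hx₁).ne'
  have hgneg : gsl (-x₁) < gsl (-x₀) :=
    gsl_lt (by linarith) (neg_ne_zero.mpr hx₁.ne') (neg_ne_zero.mpr hx₀.ne')
  have hp0 : p₀ = x₀ * gsl (-x₀) := p_eq h00 h01
  have hp1 : p₁ = x₁ * gsl (-x₁) := p_eq h10 h11
  -- B at 0
  have hRRW : (p₁ / p₀) / WR p₀ p₁ 0 = gsl (-x₁) / gsl (-x₀) := by
    rw [WR, ao_zero, ao_zero, ← hx₀def, ← hx₁def, hp0, hp1]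
    rw [div_div_div_eq, div_eq_div_iff (by positivity) hg0.ne']
    ring
  have hWRR : WR p₀ p₁ 0 / (p₁ / p₀) = gsl (-x₀) / gsl (-x₁) := by
    rw [WR, ao_zero, ao_zero, ← hx₀def, ← hx₁def, hp0, hp1]
    rw [div_div_div_eq, div_eq_div_iff (by positivity) hg1.ne']
    ring
  have hB0 : B p₀ p₁ 0 = gsl (-x₀) / gsl (-x₁) := by
    rw [B, hRRW, hWRR, max_eq_right]
    exact le_of_lt (lt_trans ((div_lt_one hg0).mpr hgneg) ((one_lt_div hg1).mpr hgneg))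
  -- B at l is at least WR l / RR
  have hWl : WR p₀ p₁ l / (p₁ / p₀)
      = (gsl (l * x₁) / gsl (l * x₀)) * (gsl (-x₀) / gsl (-x₁)) := by
    rw [WR, ao_eq h00 h01 hl.ne', ao_eq h10 h11 hl.ne', ← hx₀def, ← hx₁def, hp0, hp1]
    rw [div_div_div_eq]
    field_simp
  have key : gsl (-x₀) / gsl (-x₁) < WR p₀ p₁ l / (p₁ / p₀) := by
    rw [hWl]
    have h1 : 1 < gsl (l * x₁) / gsl (l * x₀) := (one_lt_div hgl0).mpr hglt
    nlinarith [div_pos hg0 hg1]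
  calc B p₀ p₁ 0 = gsl (-x₀) / gsl (-x₁) := hB0
    _ < WR p₀ p₁ l / (p₁ / p₀) := key
    _ ≤ B p₀ p₁ l := le_max_right _ _

/-- Minimality of the complementary log-log model within the Aranda-Ordaz family:
for `0 < p₀, p₁ < 1` with `p₀ ≠ p₁`, `B(0) < B(λ)` for every `λ ∈ (0,1]`. -/
theorem B_zero_min (p₀ p₁ : ℝ) (h00 : 0 < p₀) (h01 : p₀ < 1)
    (h10 : 0 < p₁) (h11 : p₁ < 1) (hne : p₀ ≠ p₁) :
    ∀ l : ℝ, 0 < l → l ≤ 1 → B p₀ p₁ 0 < B p₀ p₁ l := by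
  intro l hl _
  rcases hne.lt_or_gt with h | h
  · exact B_zero_min_lt p₀ p₁ h00 h01 h10 h11 h hl
  · rw [B_symm h00 h01 h10 h11 le_rfl, B_symm h00 h01 h10 h11 hl.le]
    exact B_zero_min_lt p₁ p₀ h10 h11 h00 h01 h hl
end
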